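/- A finite poset P admits a labeling ε: E(P) → {-1,1} making P ε-consistent if and only if P is parity consistent, i.e., for every x in P all saturated chains in the principal order ideal Λ_x = {y : y ≤ x} from a minimal element to x have length of the same parity. -/

import Mathlib

open Polynomial

variable {P : Type*}

/-- The ε-weight of a chain `x₀ ⋖ x₁ ⋖ ⋯ ⋖ xₙ`, recorded as a list:
the sum `Σ ε(x_{i-1}, x_i)` over consecutive pairs. -/
def chainWeight (ε : P → P → ℤ) (c : List P) : ℤ :=
  ((c.zip c.tail).map fun q => ε q.1 q.2).sum

/-- A (nonempty) saturated chain of the poset `P`, as a list of elements with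
each member covered by the next. -/
def IsSatChain [PartialOrder P] (c : List P) : Prop :=
  c ≠ [] ∧ c.Chain' (· ⋖ ·)

/-- A maximal chain: a saturated chain starting at a minimal element and
ending at a maximal element. -/
def IsMaxChainL [PartialOrder P] (c : List P) : Prop :=
  IsSatChain c ∧ (∀ x ∈ c.head?, IsMin x) ∧ (∀ x ∈ c.getLast?, IsMax x)

/-- A saturated chain starting at a minimal element of `P` and ending at `x`. -/
def IsSatChainFromMinTo [PartialOrder P] (x : P) (c : List P) : Prop :=
  IsSatChain c ∧ (∀ y ∈ c.head?, IsMin y) ∧ c.getLast? = some x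

/-- `ε` takes only the values `1` and `-1` on covering relations. -/
def IsSignLabeling [PartialOrder P] (ε : P → P → ℤ) : Prop :=
  ∀ x y : P, x ⋖ y → ε x y = 1 ∨ ε x y = -1

/-- `P` is `ε`-graded of rank `r`: every maximal chain has ε-weight `r`. -/
def IsEGraded [PartialOrder P] (ε : P → P → ℤ) (r : ℤ) : Prop :=
  ∀ c : List P, IsMaxChainL c → chainWeight ε c = r

/-- A `(P,ε)`-partition: an order-reversing map `σ : P → {1,2,…}` which is
strict on covering relations labeled `-1`. -/
def IsPPartition [PartialOrder P] (ε : P → P → ℤ) (σ : P → ℤ) : Prop :=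
  (∀ x, 1 ≤ σ x) ∧ (∀ x y : P, x ≤ y → σ y ≤ σ x) ∧
  (∀ x y : P, x ⋖ y → ε x y = -1 → σ y < σ x)

/-- `Ω(P,ε;n)`: the number of `(P,ε)`-partitions with largest part at most `n`. -/
noncomputable def OmegaCount [PartialOrder P] (ε : P → P → ℤ) (n : ℕ) : ℕ :=
  Nat.card {σ : P → ℤ // IsPPartition ε σ ∧ ∀ x, σ x ≤ (n : ℤ)}

/-- `P` is `ε`-consistent: for every `x`, all saturated chains from a minimal
element to `x` have the same ε-weight (equivalently, every principal order
ideal `Λ_x` is graded for the restricted labeling). -/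
def IsEConsistent [PartialOrder P] (ε : P → P → ℤ) : Prop :=
  ∀ x : P, ∀ c c' : List P, IsSatChainFromMinTo x c → IsSatChainFromMinTo x c' →
    chainWeight ε c = chainWeight ε c'

/-- `P` is parity consistent: for every `x`, all saturated chains from a
minimal element to `x` have length of the same parity. -/
def ParityConsistent (P : Type*) [PartialOrder P] : Prop :=
  ∀ x : P, ∀ c c' : List P, IsSatChainFromMinTo x c → IsSatChainFromMinTo x c' →
    c.length % 2 = c'.length % 2

/- ### Auxiliary lemmas -/

lemma chainWeight_singleton' (ε : P → P → ℤ) (a : P) : chainWeight ε [a] = 0 := rfl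

lemma chainWeight_cons_cons' (ε : P → P → ℤ) (a b : P) (l : List P) :
    chainWeight ε (a :: b :: l) = ε a b + chainWeight ε (b :: l) := by
  simp [chainWeight]

lemma chainWeight_concat' (ε : P → P → ℤ) (x : P) :
    ∀ (c : List P) (h : c ≠ []),
      chainWeight ε (c ++ [x]) = chainWeight ε c + ε (c.getLast h) x
  | [], h => absurd rfl h
  | [a], _ => by simp [chainWeight]
  | a :: b :: l, _ => by
    have ih := chainWeight_concat' ε x (b :: l) (by simp)
    simp only [List.cons_append, chainWeight_cons_cons']
    rw [show b :: (l ++ [x]) = (b :: l) ++ [x] from rfl, ih,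
      List.getLast_cons (show (b :: l) ≠ [] by simp)]
    ring

lemma chainWeight_cast [PartialOrder P] {ε : P → P → ℤ} (hε : IsSignLabeling ε) :
    ∀ c : List P, c ≠ [] → c.Chain' (· ⋖ ·) →
      ((chainWeight ε c : ℤ) : ZMod 2) = (c.length : ZMod 2) + 1
  | [], h, _ => absurd rfl h
  | [a], _, _ => by simp [chainWeight_singleton']; decide
  | a :: b :: l, _, hch => by
    rw [List.Chain', List.isChain_cons_cons] at hch
    have ih := chainWeight_cast hε (b :: l) (by simp) hch.2
    have hab : ((ε a b : ℤ) : ZMod 2) = 1 := by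
      rcases hε a b hch.1 with h | h <;> rw [h] <;> decide
    rw [chainWeight_cons_cons']
    push_cast [List.length_cons]
    rw [hab, ih]
    push_cast [List.length_cons]
    ring

/-- Every element of a finite poset is the top of some saturated chain
starting at a minimal element. -/
lemma exists_satChainFromMinTo [PartialOrder P] [Finite P] (x : P) :
    ∃ c : List P, IsSatChainFromMinTo x c := by
  apply WellFoundedLT.induction x
  intro x ih
  by_cases hx : IsMin x
  · exact ⟨[x], ⟨by simp, List.isChain_singleton x⟩, by simpa using hx, rfl⟩
  · obtain ⟨y, hy⟩ := exists_covBy_of_wellFoundedGT hx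
    obtain ⟨c, ⟨hne, hch⟩, hmin, hlast⟩ := ih y hy.lt
    refine ⟨c ++ [x], ⟨by simp, ?_⟩, ?_, ?_⟩
    · rw [List.Chain', List.isChain_append]
      refine ⟨hch, List.isChain_singleton x, ?_⟩
      intro a ha b hb
      rw [hlast] at ha
      simp only [List.head?] at hb
      obtain rfl : y = a := by simpa using ha
      obtain rfl : x = b := by simpa using hb
      exact hy
    · rw [List.head?_append_of_ne_nil _ hne]
      exact hmin
    · rw [List.getLast?_append_of_ne_nil _ (by simp)]
      rfl

/-- a finite poset `P` admits a labeling `ε : E(P) → {-1,1}`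
making `P` `ε`-consistent if and only if `P` is parity consistent. -/
theorem econsistent_iff_parity_consistent (P : Type*) [PartialOrder P] [Fintype P] [Nonempty P] :
    (∃ ε : P → P → ℤ, IsSignLabeling ε ∧ IsEConsistent ε) ↔ ParityConsistent P := by
  constructor
  · rintro ⟨ε, hsign, hcons⟩ x c c' hc hc'
    have hw := hcons x c c' hc hc'
    have h1 := chainWeight_cast hsign c hc.1.1 hc.1.2
    have h2 := chainWeight_cast hsign c' hc'.1.1 hc'.1.2
    have : ((c.length : ℕ) : ZMod 2) = ((c'.length : ℕ) : ZMod 2) := by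
      have h3 : (c.length : ZMod 2) + 1 = (c'.length : ZMod 2) + 1 := by
        rw [← h1, ← h2, hw]
      exact add_right_cancel h3
    exact (ZMod.natCast_eq_natCast_iff _ _ _).mp this
  · intro hpar
    -- the parity of any chain from a minimal element up to `x`
    set ρ : P → ZMod 2 :=
      fun x => ((Classical.choose (exists_satChainFromMinTo x)).length : ZMod 2) with hρ
    have hρ_eq : ∀ x : P, ∀ c : List P, IsSatChainFromMinTo x c →
        (c.length : ZMod 2) = ρ x := by
      intro x c hc
      exact (ZMod.natCast_eq_natCast_iff _ _ _).mpr
        (hpar x c _ hc (Classical.choose_spec (exists_satChainFromMinTo x)))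
    set ε : P → P → ℤ := fun _ y => if ρ y = 0 then 1 else -1 with hε
    have h01 : ∀ a : ZMod 2, a = 0 ∨ a = 1 := by decide
    -- main computation: weight of any chain to `x` is determined by `ρ x`
    have main : ∀ c : List P, ∀ x : P, IsSatChainFromMinTo x c →
        chainWeight ε c = if ρ x = 0 then 1 else 0 := by
      intro c
      induction c using List.reverseRecOn with
      | nil => intro x hc; exact absurd rfl hc.1.1
      | append_singleton l a ih =>
        intro x hc
        obtain rfl : a = x := by
          have := hc.2.2
          rw [List.getLast?_append_of_ne_nil _ (by simp)] at this
          simpa using this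
        rcases eq_or_ne l [] with rfl | hl
        · -- singleton chain: `a` is minimal, `ρ a = 1`
          have hx1 : ρ a = 1 := by
            have := hρ_eq a ([] ++ [a]) hc
            simpa using this.symm
          rw [show ([] : List P) ++ [a] = [a] from rfl, chainWeight_singleton',
            hx1, if_neg (by decide)]
        · -- `l` is a chain from a minimal element to `y := l.getLast hl`
          set y := l.getLast hl with hy
          have hyl : l.getLast? = some y := List.getLast?_eq_getLast_of_ne_nil hl
          have hch := hc.1.2
          rw [List.Chain', List.isChain_append] at hch
          have hyx : y ⋖ a := by
            refine hch.2.2 y ?_ a rfl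
            rw [hyl]
            rfl
          have hly : IsSatChainFromMinTo y l := by
            refine ⟨⟨hl, hch.1⟩, ?_, hyl⟩
            intro z hz
            exact hc.2.1 z (by rwa [List.head?_append_of_ne_nil _ hl])
          have ihl := ih y hly
          have hρx : ρ a = ρ y + 1 := by
            have h1 := hρ_eq y l hly
            have h2 := hρ_eq a (l ++ [a]) hc
            rw [List.length_append] at h2
            push_cast at h2
            rw [h1] at h2
            exact h2.symm
          have hεya : ε y a = if ρ a = 0 then 1 else -1 := by rw [hε]
          rw [chainWeight_concat' ε a l hl, ihl, ← hy, hεya]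
          rcases h01 (ρ y) with h | h
          · have hx1 : ρ a = 1 := by rw [hρx, h]; decide
            rw [h, hx1, if_pos rfl, if_neg (by decide), if_neg (by decide)]
            norm_num
          · have hx0 : ρ a = 0 := by rw [hρx, h]; decide
            rw [h, hx0, if_neg (by decide), if_pos rfl, if_pos rfl]
            norm_num
    refine ⟨ε, ?_, ?_⟩
    · intro x y _
      simp only [hε]
      by_cases h : ρ y = 0 <;> simp [h]
    · intro x c c' hc hc'
      rw [main c x hc, main c' x hc']
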